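/- Let G be a finite graph with constant interaction energy J and constant external field H favoring spin 1, with Hamiltonian h(σ) = −J Σ_{{i,j}∈E} δ(σ_i,σ_j) − H Σ_i δ(1,σ_i) and partition function Z(G) = Σ_{σ:V→{1,…,q}} e^{−βh(σ)}. Then Z(G) = Σ_{F∈F(G)} (∏_{i=1}^{k(F)} (e^{βH|V(F_i)|} + q − 1)) · (e^{βJ} − 1)^{|E(F)|} · ∏_{e externally active w.r.t. F} e^{βJ}, where F(G) is the set of spanning forests with components F_1,…,F_{k(F)}. -/

import Mathlib

open scoped Classical
open Finset

structure FinMultigraph (V E : Type) where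
  ends : E → Sym2 V

namespace FinMultigraph

variable {V E S R : Type} [Fintype V] [Fintype E]

/-- Two vertices are joined by an edge of `A`. -/
def adjRel (G : FinMultigraph V E) (A : Finset E) (u v : V) : Prop :=
  ∃ e ∈ A, G.ends e = s(u, v)

/-- The setoid on vertices whose classes are the connected components of the
spanning subgraph `(V, A)`. -/
def compSetoid (G : FinMultigraph V E) (A : Finset E) : Setoid V :=
  ⟨Relation.EqvGen (G.adjRel A), Relation.EqvGen.is_equivalence _⟩

/-- The connected components of the spanning subgraph `(V, A)`. -/
def Comp (G : FinMultigraph V E) (A : Finset E) : Type := Quotient (G.compSetoid A)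

noncomputable instance (G : FinMultigraph V E) (A : Finset E) : Fintype (G.Comp A) :=
  @Quotient.fintype V _ (G.compSetoid A) (Classical.decRel _)

/-- `k(A)`: the number of connected components of the spanning subgraph `(V, A)`. -/
noncomputable def kA (G : FinMultigraph V E) (A : Finset E) : ℕ := Nat.card (G.Comp A)

/-- `u` and `v` are connected in the spanning subgraph `(V, A)`. -/
def Connects (G : FinMultigraph V E) (A : Finset E) (u v : V) : Prop :=
  Relation.EqvGen (G.adjRel A) u v

/-- The endpoints of `e` are connected in the spanning subgraph `(V, A)`. -/
def EndsConnected (G : FinMultigraph V E) (A : Finset E) (e : E) : Prop :=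
  ∃ u v, G.ends e = s(u, v) ∧ G.Connects A u v

def IsLoop (G : FinMultigraph V E) (e : E) : Prop := (G.ends e).IsDiag

/-- `(V, A)` is a forest (acyclic spanning subgraph): every edge of `A` is a bridge of it. -/
def IsForest (G : FinMultigraph V E) (A : Finset E) : Prop :=
  ∀ e ∈ A, ¬ G.EndsConnected (A.erase e) e

/-- All vertices are pairwise connected using edges of `A`. -/
def ConnectsAll (G : FinMultigraph V E) (A : Finset E) : Prop := ∀ u v, G.Connects A u v

/-- A maximal spanning forest: a forest restricting to a spanning tree of each
connected component of `G`. -/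
def IsSpanningTree (G : FinMultigraph V E) (T : Finset E) : Prop :=
  G.IsForest T ∧ ∀ u v, G.Connects T u v ↔ G.Connects Finset.univ u v

/-- `e ∈ T` is internally active: `e` is minimal in the cut
`{f : (T - e) ∪ {f} ∈ 𝒯(G)}`. -/
def IntActive [LinearOrder E] (G : FinMultigraph V E) (T : Finset E) (e : E) : Prop :=
  e ∈ T ∧ ∀ f, G.IsSpanningTree (insert f (T.erase e)) → e ≤ f

/-- The edge set of the unique cycle of `T ∪ {e}` (when it exists):
`e` together with those `f ∈ T` whose removal disconnects the ends of `e`. -/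
noncomputable def cycleEdges (G : FinMultigraph V E) (T : Finset E) (e : E) : Finset E :=
  insert e (T.filter fun f => ¬ G.EndsConnected (T.erase f) e)

/-- `e ∉ T` is externally active: `T ∪ {e}` contains a cycle through `e` and
`e` is the minimal edge of that cycle. -/
def ExtActive [LinearOrder E] (G : FinMultigraph V E) (T : Finset E) (e : E) : Prop :=
  e ∉ T ∧ G.EndsConnected T e ∧ ∀ f ∈ G.cycleEdges T e, e ≤ f

/-- The vertex set of the component `c` of `(V, A)`. -/
noncomputable def compVerts (G : FinMultigraph V E) (A : Finset E) (c : G.Comp A) : Finset V :=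
  Finset.univ.filter fun v => (Quotient.mk (G.compSetoid A) v) = c

/-- The total vertex weight of the component `c` of `(V, A)`. -/
noncomputable def compWeight [AddCommMonoid S] (G : FinMultigraph V E) (A : Finset E)
    (ω : V → S) (c : G.Comp A) : S :=
  ∑ v ∈ G.compVerts A c, ω v

/-- The V-polynomial, defined by its state sum. -/
noncomputable def Vpoly [AddCommMonoid S] [CommRing R] (G : FinMultigraph V E)
    (ω : V → S) (γ : E → R) : MvPolynomial S R :=
  ∑ A : Finset E, (∏ c : G.Comp A, MvPolynomial.X (G.compWeight A ω c)) *
    MvPolynomial.C (∏ e ∈ A, γ e)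

/-- The multivariate Tutte polynomial `Z_T(G; q, γ)` as a polynomial in `q`. -/
noncomputable def ZT [CommRing R] (G : FinMultigraph V E) (γ : E → R) : Polynomial R :=
  ∑ A : Finset E, Polynomial.X ^ (G.kA A) * Polynomial.C (∏ e ∈ A, γ e)

/-- Deletion of the edge `e`. -/
def del (G : FinMultigraph V E) (e : E) : FinMultigraph V {f : E // f ≠ e} := ⟨fun f => G.ends f.1⟩

/-- Contraction of the edge `e`: vertices are the components of `(V, {e})`. -/
noncomputable def contract (G : FinMultigraph V E) (e : E) : FinMultigraph (G.Comp {e}) {f : E // f ≠ e} :=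
  ⟨fun f => (G.ends f.1).map (Quotient.mk (G.compSetoid {e}))⟩

/-- The forest `T` with the edges of `B` contracted: vertices are the components
of `(V, B)` and edges are `T \ B`. -/
noncomputable def contractIn (G : FinMultigraph V E) (T B : Finset E) :
    FinMultigraph (G.Comp B) ↥(T \ B : Finset E) :=
  ⟨fun f => (G.ends f.1).map (Quotient.mk (G.compSetoid B))⟩

/-- The edges of `G` with both ends inside `P`. -/
noncomputable def edgesIn (G : FinMultigraph V E) (P : Finset V) : Finset E :=
  Finset.univ.filter fun e => ∀ v ∈ G.ends e, v ∈ P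

/-- The subgraph of `G` induced by the vertex set `P`. -/
noncomputable def induce (G : FinMultigraph V E) (P : Finset V) : FinMultigraph ↥P ↥(G.edgesIn P) :=
  ⟨fun e => (G.ends e.1).pmap (fun v hv => (⟨v, hv⟩ : ↥P))
    (by have he := e.2; simp only [edgesIn, Finset.mem_filter] at he; exact he.2)⟩

/-- The block `B` induces a connected subgraph of `G`. -/
def BlockConnected (G : FinMultigraph V E) (B : Finset V) : Prop :=
  ∀ u ∈ B, ∀ v ∈ B, Relation.EqvGen (G.adjRel (G.edgesIn B)) u v

/-- A connected partition of `V(G)`: every vertex lies in exactly one block,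
blocks are nonempty, and each block induces a connected subgraph. -/
def IsConnectedPartition (G : FinMultigraph V E) (P : Finset (Finset V)) : Prop :=
  (∀ B ∈ P, B.Nonempty) ∧ (∀ v : V, ∃! B, B ∈ P ∧ v ∈ B) ∧ ∀ B ∈ P, G.BlockConnected B

/-- The partition `Π(A)` of `V(G)` into the components of `(V, A)`. -/
noncomputable def partitionOf (G : FinMultigraph V E) (A : Finset E) : Finset (Finset V) :=
  Finset.univ.image fun c : G.Comp A => G.compVerts A c

/-- The internally inactive edges of the spanning tree `T`. -/
noncomputable def intInactives [LinearOrder E] (G : FinMultigraph V E) (T : Finset E) : Finset E :=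
  T.filter fun e => ¬ G.IntActive T e

/-- The internally active edges of the spanning tree `T`. -/
noncomputable def intActives [LinearOrder E] (G : FinMultigraph V E) (T : Finset E) : Finset E :=
  T.filter fun e => G.IntActive T e

/-- The externally active edges w.r.t. the spanning tree / forest `T`. -/
noncomputable def extActives [LinearOrder E] (G : FinMultigraph V E) (T : Finset E) : Finset E :=
  Finset.univ.filter fun e => G.ExtActive T e

/-- Kronecker delta `δ(σ_i, σ_j)` for the two ends of the edge `e`. -/
noncomputable def edgeDelta (G : FinMultigraph V E) {q : ℕ} (σ : V → Fin q) (e : E) : ℂ :=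
  Sym2.lift ⟨fun u v => if σ u = σ v then 1 else 0, fun u v => by simp [eq_comm]⟩ (G.ends e)

/-- The Potts partition function with variable interactions `J` and
field vectors `M`. -/
noncomputable def Zext (G : FinMultigraph V E) (q : ℕ) (β : ℂ) (J : E → ℂ) (M : V → Fin q → ℂ) : ℂ :=
  ∑ σ : V → Fin q, Complex.exp (β * ((∑ e : E, J e * G.edgeDelta σ e) +
    ∑ v : V, ∑ α : Fin q, M v α * (if α = σ v then 1 else 0)))

/-- The Potts partition function with constant interaction `J` and constant
field `H` favouring the first spin. -/
noncomputable def ZconstField (G : FinMultigraph V E) (q : ℕ) (β J H : ℂ) : ℂ :=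
  ∑ σ : V → Fin q, Complex.exp (β * (J * (∑ e : E, G.edgeDelta σ e) +
    H * ∑ v : V, (if (σ v : ℕ) = 0 then (1 : ℂ) else 0)))

/-- The zero-field Potts partition function with constant interaction `J`. -/
noncomputable def Zzero (G : FinMultigraph V E) (q : ℕ) (β J : ℂ) : ℂ :=
  ∑ σ : V → Fin q, Complex.exp (β * J * ∑ e : E, G.edgeDelta σ e)

end FinMultigraph

set_option linter.unusedSectionVars false
set_option linter.unusedVariables false
set_option maxHeartbeats 1000000

namespace FinMultigraph

variable {V E : Type} [Fintype V] [Fintype E]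

variable {G : FinMultigraph V E} {A B F T : Finset E} {u v a b : V} {e f : E}

lemma connects_refl (G : FinMultigraph V E) (A : Finset E) (u : V) : G.Connects A u u :=
  Relation.EqvGen.refl u

lemma Connects.symm (h : G.Connects A u v) : G.Connects A v u := Relation.EqvGen.symm _ _ h

lemma Connects.trans {w : V} (h : G.Connects A u v) (h' : G.Connects A v w) :
    G.Connects A u w := Relation.EqvGen.trans _ _ _ h h'

lemma Connects.mono (hAB : A ⊆ B) (h : G.Connects A u v) : G.Connects B u v :=
  Relation.EqvGen.mono (fun u v ⟨e, he, hee⟩ => ⟨e, hAB he, hee⟩) _ _ h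

lemma connects_of_edge (he : e ∈ A) (h : G.ends e = s(u, v)) : G.Connects A u v :=
  Relation.EqvGen.rel _ _ ⟨e, he, h⟩

lemma erase_conv (i1 i2 : DecidableEq E) (s : Finset E) (b : E) :
    @Finset.erase E i1 s b = @Finset.erase E i2 s b := by
  rw [Subsingleton.elim i1 i2]

lemma sym2_exists_eq (z : Sym2 V) : ∃ a b, z = s(a, b) :=
  Sym2.ind (fun a b => ⟨a, b, rfl⟩) z

lemma exists_ends (G : FinMultigraph V E) (e : E) : ∃ a b, G.ends e = s(a, b) :=
  sym2_exists_eq _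

lemma endsConnected_iff (h : G.ends e = s(a, b)) :
    G.EndsConnected A e ↔ G.Connects A a b := by
  constructor
  · rintro ⟨u, v, huv, hc⟩
    rw [h] at huv
    rcases Sym2.eq_iff.mp huv with ⟨rfl, rfl⟩ | ⟨rfl, rfl⟩
    · exact hc
    · exact hc.symm
  · exact fun hc => ⟨a, b, h, hc⟩

lemma EndsConnected.mono (hAB : A ⊆ B) (h : G.EndsConnected A e) : G.EndsConnected B e := by
  obtain ⟨u, v, huv, hc⟩ := h; exact ⟨u, v, huv, hc.mono hAB⟩

/-- Inserting an edge whose ends are already connected doesn't change connectivity. -/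
lemma connects_insert_of_endsConnected [inst : DecidableEq E] (h : G.EndsConnected A e) :
    G.Connects (insert e A) u v ↔ G.Connects A u v := by
  constructor
  · intro hc
    induction hc with
    | rel x y hxy =>
      obtain ⟨f, hf, hends⟩ := hxy
      rcases Finset.mem_insert.mp hf with rfl | hfA
      · obtain ⟨p, q, hpq, hcpq⟩ := h
        rw [hpq] at hends
        rcases Sym2.eq_iff.mp hends with ⟨rfl, rfl⟩ | ⟨rfl, rfl⟩
        · exact hcpq
        · exact hcpq.symm
      · exact connects_of_edge hfA hends
    | refl x => exact connects_refl G A x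
    | symm x y _ ih => exact ih.symm
    | trans x y z _ _ ih1 ih2 => exact ih1.trans ih2
  · exact fun hc => hc.mono (Finset.subset_insert _ _)

/-- Splitting lemma: connectivity after inserting an edge with ends `a, b`. -/
lemma connects_insert_iff [inst : DecidableEq E] (hab : G.ends e = s(a, b)) :
    G.Connects (insert e B) u v ↔ G.Connects B u v ∨
      (G.Connects B u a ∧ G.Connects B b v) ∨ (G.Connects B u b ∧ G.Connects B a v) := by
  constructor
  · intro hc
    induction hc with
    | rel x y hxy =>
      obtain ⟨f, hf, hends⟩ := hxy
      rcases Finset.mem_insert.mp hf with rfl | hfB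
      · rw [hab] at hends
        rcases Sym2.eq_iff.mp hends with ⟨rfl, rfl⟩ | ⟨rfl, rfl⟩
        · exact Or.inr (Or.inl ⟨connects_refl G B _, connects_refl G B _⟩)
        · exact Or.inr (Or.inr ⟨connects_refl G B _, connects_refl G B _⟩)
      · exact Or.inl (connects_of_edge hfB hends)
    | refl x => exact Or.inl (connects_refl G B x)
    | symm x y _ ih =>
      rcases ih with h | ⟨h1, h2⟩ | ⟨h1, h2⟩
      · exact Or.inl h.symm
      · exact Or.inr (Or.inr ⟨h2.symm, h1.symm⟩)
      · exact Or.inr (Or.inl ⟨h2.symm, h1.symm⟩)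
    | trans x y z _ _ ih1 ih2 =>
      rcases ih1 with h | ⟨h1, h2⟩ | ⟨h1, h2⟩ <;>
        rcases ih2 with h' | ⟨h1', h2'⟩ | ⟨h1', h2'⟩
      · exact Or.inl (h.trans h')
      · exact Or.inr (Or.inl ⟨h.trans h1', h2'⟩)
      · exact Or.inr (Or.inr ⟨h.trans h1', h2'⟩)
      · exact Or.inr (Or.inl ⟨h1, h2.trans h'⟩)
      · exact Or.inr (Or.inl ⟨h1, h2'⟩)
      · exact Or.inl (h1.trans h2')
      · exact Or.inr (Or.inr ⟨h1, h2.trans h'⟩)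
      · exact Or.inl (h1.trans h2')
      · exact Or.inr (Or.inr ⟨h1, h2'⟩)
  · rintro (h | ⟨h1, h2⟩ | ⟨h1, h2⟩)
    · exact h.mono (Finset.subset_insert _ _)
    · exact ((h1.mono (Finset.subset_insert e B)).trans
        ((connects_of_edge (Finset.mem_insert_self e B) hab).trans
          (h2.mono (Finset.subset_insert e B))))
    · exact ((h1.mono (Finset.subset_insert e B)).trans
        (((connects_of_edge (Finset.mem_insert_self e B) hab).symm).trans
          (h2.mono (Finset.subset_insert e B))))


lemma IsForest.subset (hF : G.IsForest F) (hBF : B ⊆ F) : G.IsForest B := by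
  intro e he hEC
  exact hF e (hBF he) (hEC.mono (Finset.erase_subset_erase e hBF))

/-- Redundant edges can be removed from a union without changing connectivity. -/
lemma connects_union_of_endsConnected [inst : DecidableEq E] (hS : ∀ s ∈ T, G.EndsConnected B s)
    (h : G.Connects (B ∪ T) u v) : G.Connects B u v := by
  induction T using Finset.induction generalizing u v with
  | empty => simpa using h
  | insert s T' hs ih =>
    have h1 : G.Connects (insert s (B ∪ T')) u v := by
      refine h.mono ?_
      intro x hx
      rcases Finset.mem_union.mp hx with hxB | hxT
      · exact Finset.mem_insert_of_mem (Finset.mem_union_left _ hxB)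
      · rcases Finset.mem_insert.mp hxT with rfl | hxT'
        · exact Finset.mem_insert_self _ _
        · exact Finset.mem_insert_of_mem (Finset.mem_union_right _ hxT')
    have hsEC : G.EndsConnected (B ∪ T') s :=
      (hS s (Finset.mem_insert_self _ _)).mono Finset.subset_union_left
    have h2 := (connects_insert_of_endsConnected hsEC).mp h1
    exact ih (fun t ht => hS t (Finset.mem_insert_of_mem ht)) h2

/-- In a forest, if `a, b` are connected but not within `B ⊆ F`, some bridge for
`(a, b)` lies outside `B`. -/
lemma exists_bridge [inst : DecidableEq E] (hF : G.IsForest F) (hab : G.Connects F a b) (hBF : B ⊆ F)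
    (hnB : ¬ G.Connects B a b) : ∃ f ∈ F, f ∉ B ∧ ¬ G.Connects (F.erase f) a b := by
  obtain ⟨n, hn⟩ : ∃ n, F.card = n := ⟨_, rfl⟩
  induction n using Nat.strong_induction_on generalizing F with
  | _ n ih =>
  -- F ≠ B, pick f ∈ F \ B
  have hne : ∃ f, f ∈ F ∧ f ∉ B := by
    by_contra hcon
    push_neg at hcon
    exact hnB (hab.mono (fun x hx => by_contra fun hxB => hxB (hcon x hx)))
  obtain ⟨f, hfF, hfB⟩ := hne
  by_cases hbr : G.Connects (F.erase f) a b
  · -- recurse on F.erase f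
    have hcard : (F.erase f).card < F.card := Finset.card_erase_lt_of_mem hfF
    have hB' : B ⊆ F.erase f := fun x hx =>
      Finset.mem_erase.mpr ⟨fun h => hfB (h ▸ hx), hBF hx⟩
    obtain ⟨f', hf'F, hf'B, hbr'⟩ :=
      ih (F.erase f).card (hn ▸ hcard) (hF.subset (Finset.erase_subset _ _)) hbr hB' rfl
    have hff' : f ≠ f' := fun h => (Finset.mem_erase.mp hf'F).1 h.symm
    refine ⟨f', (Finset.mem_erase.mp hf'F).2, hf'B, ?_⟩
    intro hcon
    obtain ⟨fa, fb, hfe⟩ := G.exists_ends f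
    have hfbridge : ¬ G.Connects (F.erase f) fa fb :=
      fun hc => hF f hfF ((endsConnected_iff hfe).mpr
        (hc.mono fun x hx => erase_conv inst _ F f ▸ hx))
    have hrw : F.erase f' = insert f ((F.erase f).erase f') := by
      rw [Finset.erase_right_comm, Finset.insert_erase
        (Finset.mem_erase.mpr ⟨hff', hfF⟩)]
    rw [hrw] at hcon
    have hD : (F.erase f).erase f' ⊆ F.erase f := Finset.erase_subset _ _
    rcases (connects_insert_iff hfe).mp hcon with h | ⟨h1, h2⟩ | ⟨h1, h2⟩
    · exact hbr' h
    · exact hfbridge (((h1.mono hD).symm.trans hbr).trans (h2.mono hD).symm)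
    · exact hfbridge (((h2.mono hD).trans hbr.symm).trans (h1.mono hD))
  · exact ⟨f, hfF, hfB, hbr⟩

variable [LinearOrder E]

/-- A greedily independent edge set (every edge's ends not connected by larger
edges) is a forest. -/
lemma forest_of_greedy (h : ∀ e ∈ B, ¬ G.EndsConnected (B.filter fun f => e < f) e) :
    G.IsForest B := by
  classical
  obtain ⟨n, hn⟩ : ∃ n, B.card = n := ⟨_, rfl⟩
  induction n using Nat.strong_induction_on generalizing B with
  | _ n ih =>
  rcases Finset.eq_empty_or_nonempty B with rfl | hne
  · intro e he; simp at he
  have hgB : B.min' hne ∈ B := B.min'_mem hne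
  set g := B.min' hne with hg
  have hsubg : ∀ (X : Finset E), (∀ x ∈ X, x ≠ g ∧ x ∈ B) →
      ∀ x ∈ X, x ∈ B.filter fun f => g < f := by
    intro X hX x hx
    obtain ⟨hxg, hxB⟩ := hX x hx
    rw [Finset.mem_filter]
    exact ⟨hxB, lt_of_le_of_ne (B.min'_le x hxB) (Ne.symm hxg)⟩
  have herase : ∀ x ∈ B.erase g, x ∈ B.filter fun f => g < f := by
    refine hsubg _ ?_
    intro x hx
    rw [Finset.mem_erase] at hx
    exact hx
  have hB' : G.IsForest (B.erase g) := by
    refine ih (B.erase g).card (hn ▸ Finset.card_erase_lt_of_mem hgB) ?_ rfl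
    intro e he hEC
    refine h e (Finset.mem_of_mem_erase he) (hEC.mono ?_)
    intro x hx
    simp only [Finset.mem_filter, Finset.mem_erase] at hx ⊢
    exact ⟨hx.1.2, hx.2⟩
  intro e heB
  rcases eq_or_ne e g with rfl | heg
  · intro hEC
    exact h _ heB (hEC.mono fun x hx => herase x (erase_conv _ _ B _ ▸ hx))
  · intro hEC
    obtain ⟨ga, gb, hge⟩ := G.exists_ends g
    have hgbr : ¬ G.Connects (B.erase g) ga gb := fun hc =>
      h g hgB ((endsConnected_iff hge).mpr (hc.mono herase))
    obtain ⟨ea, eb, hee⟩ := G.exists_ends e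
    have heB' : e ∈ B.erase g := Finset.mem_erase.mpr ⟨heg, heB⟩
    have hc : G.Connects (insert g ((B.erase g).erase e)) ea eb := by
      refine ((endsConnected_iff hee).mp hEC).mono ?_
      intro x hx
      simp only [Finset.mem_erase] at hx
      rcases eq_or_ne x g with rfl | hxg
      · exact Finset.mem_insert_self _ _
      · exact Finset.mem_insert_of_mem (by simp only [Finset.mem_erase]; exact ⟨hx.1, hxg, hx.2⟩)
    have hD : ∀ x ∈ (B.erase g).erase e, x ∈ B.erase g := fun x hx =>
      Finset.mem_of_mem_erase hx
    have heab : G.Connects (B.erase g) ea eb := connects_of_edge heB' hee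
    rcases (connects_insert_iff hge).mp hc with h' | ⟨h1, h2⟩ | ⟨h1, h2⟩
    · refine hB' e heB' ((endsConnected_iff hee).mpr (h'.mono ?_))
      intro x hx
      simp only [Finset.mem_erase] at hx ⊢
      exact hx
    · exact hgbr (((h1.mono hD).symm.trans heab).trans (h2.mono hD).symm)
    · exact hgbr (((h2.mono hD).trans heab.symm).trans (h1.mono hD))

/-- The reverse-Kruskal forest of `A`: keep `e` iff its ends are not connected
by the strictly larger edges of `A`. -/
noncomputable def krk (G : FinMultigraph V E) (A : Finset E) : Finset E :=
  A.filter fun e => ¬ G.EndsConnected (A.filter fun f => e < f) e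

lemma krk_subset (G : FinMultigraph V E) (A : Finset E) : G.krk A ⊆ A := Finset.filter_subset _ _

lemma krk_conn_aux (A : Finset E) : ∀ n (e : E),
    ((univ.filter fun f => e < f).card ≤ n) → ∀ u v,
    G.Connects (A.filter fun f => e < f) u v →
    G.Connects ((G.krk A).filter fun f => e < f) u v := by
  intro n
  induction n using Nat.strong_induction_on with
  | _ n ihn =>
  intro e hcard u v h
  induction h with
  | rel x y hxy =>
    obtain ⟨f, hf, hends⟩ := hxy
    rw [Finset.mem_filter] at hf
    obtain ⟨hfA, hef⟩ := hf
    by_cases hkrk : f ∈ G.krk A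
    · exact connects_of_edge (Finset.mem_filter.mpr ⟨hkrk, hef⟩) hends
    · have hrej : G.EndsConnected (A.filter fun g => f < g) f := by
        by_contra hcon
        exact hkrk (Finset.mem_filter.mpr ⟨hfA, hcon⟩)
      obtain ⟨a, b, hab, hcab⟩ := hrej
      have hlt : ((univ.filter fun g => f < g).card) < (univ.filter fun g => e < g).card := by
        apply Finset.card_lt_card
        constructor
        · intro g hg
          rw [Finset.mem_filter] at hg ⊢
          exact ⟨hg.1, hef.trans hg.2⟩
        · intro hsub
          have := hsub (Finset.mem_filter.mpr ⟨Finset.mem_univ f, hef⟩)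
          rw [Finset.mem_filter] at this
          exact lt_irrefl f this.2
      have hcab' := ihn _ (Nat.lt_of_lt_of_le hlt hcard) f le_rfl a b hcab
      have hcab'' : G.Connects ((G.krk A).filter fun g => e < g) a b := by
        refine hcab'.mono ?_
        intro g hg
        rw [Finset.mem_filter] at hg ⊢
        exact ⟨hg.1, hef.trans hg.2⟩
      rw [hab] at hends
      rcases Sym2.eq_iff.mp hends with ⟨rfl, rfl⟩ | ⟨rfl, rfl⟩
      · exact hcab''
      · exact hcab''.symm
  | refl z => exact connects_refl _ _ _
  | symm x y _ ih => exact ih.symm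
  | trans x y z _ _ ih1 ih2 => exact ih1.trans ih2

lemma connects_krk (A : Finset E) (u v : V) :
    G.Connects A u v ↔ G.Connects (G.krk A) u v := by
  constructor
  · intro h
    induction h with
    | rel x y hxy =>
      obtain ⟨f, hfA, hends⟩ := hxy
      by_cases hkrk : f ∈ G.krk A
      · exact connects_of_edge hkrk hends
      · have hrej : G.EndsConnected (A.filter fun g => f < g) f := by
          by_contra hcon
          exact hkrk (Finset.mem_filter.mpr ⟨hfA, hcon⟩)
        obtain ⟨a, b, hab, hcab⟩ := hrej
        have hcab' := G.krk_conn_aux A _ f le_rfl a b hcab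
        have hcab'' : G.Connects (G.krk A) a b := hcab'.mono (Finset.filter_subset _ _)
        rw [hab] at hends
        rcases Sym2.eq_iff.mp hends with ⟨rfl, rfl⟩ | ⟨rfl, rfl⟩
        · exact hcab''
        · exact hcab''.symm
    | refl z => exact connects_refl _ _ _
    | symm x y _ ih => exact ih.symm
    | trans x y z _ _ ih1 ih2 => exact ih1.trans ih2
  · exact fun h => h.mono (G.krk_subset A)

lemma krk_forest (G : FinMultigraph V E) (A : Finset E) : G.IsForest (G.krk A) := by
  apply forest_of_greedy
  intro e he hEC
  rw [krk, Finset.mem_filter] at he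
  refine he.2 (hEC.mono ?_)
  exact Finset.filter_subset_filter _ (G.krk_subset A)


/-- Rejected edges are externally active w.r.t. the reverse-Kruskal forest. -/
lemma extActive_of_rejected (hfA : e ∈ A) (hrej : e ∉ G.krk A) :
    G.ExtActive (G.krk A) e := by
  have hrej' : G.EndsConnected (A.filter fun g => e < g) e := by
    by_contra hcon
    exact hrej (Finset.mem_filter.mpr ⟨hfA, hcon⟩)
  obtain ⟨a, b, hab, hcab⟩ := hrej'
  have hcab' := G.krk_conn_aux A _ e le_rfl a b hcab
  refine ⟨hrej, ⟨a, b, hab, hcab'.mono (Finset.filter_subset _ _)⟩, ?_⟩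
  intro f hf
  simp only [cycleEdges, Finset.mem_insert, Finset.mem_filter] at hf
  rcases hf with rfl | hf
  · exact le_rfl
  · obtain ⟨hfk, hbr⟩ := hf
    by_contra hlt
    push_neg at hlt
    refine hbr ⟨a, b, hab, hcab'.mono ?_⟩
    intro g hg
    rw [Finset.mem_filter] at hg
    simp only [Finset.mem_erase]
    exact ⟨fun h => absurd (h ▸ hg.2) (lt_asymm hlt), hg.1⟩

/-- (d1): an externally active edge's ends are connected using only larger forest edges. -/
lemma extActive_conn_gt (hF : G.IsForest F) (he : G.ExtActive F e)
    (hab : G.ends e = s(a, b)) : G.Connects (F.filter fun f => e < f) a b := by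
  obtain ⟨heF, hEC, hcyc⟩ := he
  have hconn : G.Connects F a b := (endsConnected_iff hab).mp hEC
  by_contra hcon
  obtain ⟨f, hfF, hfB, hbr⟩ := exists_bridge (inst := LinearOrder.toDecidableEq)
    hF hconn (Finset.filter_subset _ _) hcon
  have hfcyc : f ∈ G.cycleEdges F e := by
    simp only [cycleEdges, Finset.mem_insert, Finset.mem_filter]
    right
    refine ⟨hfF, fun hEC' => hbr ?_⟩
    refine ((endsConnected_iff hab).mp hEC').mono ?_
    intro g hg
    exact erase_conv _ _ F f ▸ hg
  have hef := hcyc f hfcyc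
  have hfe : f ≠ e := fun h => heF (h ▸ hfF)
  have : e < f := lt_of_le_of_ne hef (Ne.symm hfe)
  exact hfB (Finset.mem_filter.mpr ⟨hfF, this⟩)

/-- (d2): a forest edge smaller than an externally active edge is not on its cycle. -/
lemma endsConnected_erase_of_lt (he : e ∈ F) (hs : G.ExtActive F s') (hlt : e < s') :
    G.EndsConnected (F.erase e) s' := by
  by_contra hcon
  have hecyc : e ∈ G.cycleEdges F s' := by
    simp only [cycleEdges, Finset.mem_insert, Finset.mem_filter]
    right
    refine ⟨he, fun hEC' => hcon (hEC'.mono ?_)⟩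
    intro g hg
    exact erase_conv _ _ F e ▸ hg
  exact absurd (hs.2.2 e hecyc) (not_le_of_gt hlt)

/-- (d3): attaching externally active edges to a forest gives back the forest
under reverse Kruskal. -/
lemma krk_union (hF : G.IsForest F) (hS : ∀ s' ∈ S, G.ExtActive F s') :
    G.krk (F ∪ S) = F := by
  ext e
  rw [krk, Finset.mem_filter]
  constructor
  · rintro ⟨heFS, hnEC⟩
    rcases Finset.mem_union.mp heFS with heF | heS
    · exact heF
    · exfalso
      obtain ⟨a, b, hab⟩ := G.exists_ends e
      have h1 : G.Connects (F.filter fun f => e < f) a b :=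
        extActive_conn_gt hF (hS e heS) hab
      refine hnEC ⟨a, b, hab, h1.mono ?_⟩
      intro g hg
      rw [Finset.mem_filter] at hg ⊢
      exact ⟨Finset.mem_union_left _ hg.1, hg.2⟩
  · intro heF
    refine ⟨Finset.mem_union_left _ heF, ?_⟩
    intro hEC
    obtain ⟨a, b, hab, hc⟩ := hEC
    -- edges of (F ∪ S).filter (e < ·) : either F.erase e edges or S edges > e
    have hc2 : G.Connects ((F.erase e) ∪ (S.filter fun f => e < f)) a b := by
      refine hc.mono ?_
      intro g hg
      rw [Finset.mem_filter] at hg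
      obtain ⟨hgFS, hge⟩ := hg
      rcases Finset.mem_union.mp hgFS with hgF | hgS
      · exact Finset.mem_union_left _ (Finset.mem_erase.mpr ⟨ne_of_gt hge, hgF⟩)
      · exact Finset.mem_union_right _ (Finset.mem_filter.mpr ⟨hgS, hge⟩)
    have hc3 : G.Connects (F.erase e) a b := by
      refine connects_union_of_endsConnected ?_ hc2
      intro t ht
      rw [Finset.mem_filter] at ht
      exact endsConnected_erase_of_lt heF (hS t ht.1) ht.2
    exact hF e heF ⟨a, b, hab, hc3.mono fun x hx => erase_conv _ _ F e ▸ hx⟩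


noncomputable def sProd (f : ℕ → ℂ) (s : Setoid V) : ℂ :=
  @Finset.prod (Quotient s) ℂ _ (@Finset.univ _ (@Quotient.fintype V _ s (Classical.decRel _)))
    fun c => f ((Finset.univ.filter fun v => Quotient.mk s v = c).card)

lemma compProd_eq (G : FinMultigraph V E) (A : Finset E) (f : ℕ → ℂ) :
    (∏ c : G.Comp A, f ((G.compVerts A c).card)) = sProd f (G.compSetoid A) := by
  unfold sProd compVerts; congr 1; funext c; congr

lemma compSetoid_congr {G : FinMultigraph V E} {A B : Finset E}
    (h : ∀ u v, G.Connects A u v ↔ G.Connects B u v) : G.compSetoid A = G.compSetoid B :=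
  Setoid.ext h

variable {G : FinMultigraph V E} {A B F S T : Finset E} {u v a b : V} {e f : E} {q : ℕ}

lemma edgeDelta_eq (σ : V → Fin q) (h : G.ends e = s(a, b)) :
    G.edgeDelta σ e = if σ a = σ b then 1 else 0 := by
  rw [edgeDelta, h, Sym2.lift_mk]

lemma edgeDelta_zero_or_one (σ : V → Fin q) (e : E) :
    G.edgeDelta σ e = 0 ∨ G.edgeDelta σ e = 1 := by
  obtain ⟨a, b, hab⟩ := G.exists_ends e
  rw [edgeDelta_eq σ hab]
  split
  · exact Or.inr rfl
  · exact Or.inl rfl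

lemma eq_of_connects_of_all_one (σ : V → Fin q)
    (h1 : ∀ e ∈ A, G.edgeDelta σ e = 1) (h : G.Connects A u v) : σ u = σ v := by
  induction h with
  | rel x y hxy =>
    obtain ⟨f, hfA, hends⟩ := hxy
    have := h1 f hfA
    rw [edgeDelta_eq σ hends] at this
    by_contra hne
    rw [if_neg hne] at this
    exact zero_ne_one this
  | refl z => rfl
  | symm x y _ ih => exact ih.symm
  | trans x y z _ _ ih1 ih2 => exact ih1.trans ih2

lemma prod_edgeDelta (σ : V → Fin q) :
    (∏ e ∈ A, G.edgeDelta σ e) =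
      if (∀ u v, G.Connects A u v → σ u = σ v) then 1 else 0 := by
  split
  case isTrue hyp =>
    apply Finset.prod_eq_one
    intro e he
    obtain ⟨a, b, hab⟩ := G.exists_ends e
    rw [edgeDelta_eq σ hab, if_pos (hyp a b (connects_of_edge he hab))]
  case isFalse hyp =>
    have : ∃ e ∈ A, G.edgeDelta σ e = 0 := by
      by_contra hcon
      push_neg at hcon
      refine hyp ?_
      intro u v hc
      refine eq_of_connects_of_all_one σ ?_ hc
      intro e he
      rcases edgeDelta_zero_or_one σ e (G := G) with h0 | h1
      · exact absurd h0 (hcon e he)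
      · exact h1
    obtain ⟨e, he, h0⟩ := this
    exact Finset.prod_eq_zero he h0

/-- The spin sum over a fixed edge subset factorises over components. -/
lemma spin_sum (G : FinMultigraph V E) (q : ℕ) (hq : 1 ≤ q) (β H : ℂ) (A : Finset E) :
    ∑ σ : V → Fin q, (∏ e ∈ A, G.edgeDelta σ e) *
        ∏ v : V, (if (σ v : ℕ) = 0 then Complex.exp (β * H) else 1) =
      ∏ c : G.Comp A, (Complex.exp (β * H * ((G.compVerts A c).card : ℂ)) + (q : ℂ) - 1) := by
  classical
  have hq0 : 0 < q := hq
  -- restrict to compatible states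
  have step1 : ∑ σ : V → Fin q, (∏ e ∈ A, G.edgeDelta σ e) *
        ∏ v : V, (if (σ v : ℕ) = 0 then Complex.exp (β * H) else 1) =
      ∑ σ ∈ Finset.univ.filter (fun σ : V → Fin q => ∀ u v, G.Connects A u v → σ u = σ v),
        ∏ v : V, (if (σ v : ℕ) = 0 then Complex.exp (β * H) else 1) := by
    rw [Finset.sum_filter]
    apply Finset.sum_congr rfl
    intro σ _
    rw [prod_edgeDelta]
    split <;> simp
  rw [step1]
  -- biject with colourings of components
  have step2 : ∑ σ ∈ Finset.univ.filter (fun σ : V → Fin q => ∀ u v, G.Connects A u v → σ u = σ v),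
        ∏ v : V, (if (σ v : ℕ) = 0 then Complex.exp (β * H) else 1) =
      ∑ τ : G.Comp A → Fin q,
        ∏ v : V, (if (τ (Quotient.mk (G.compSetoid A) v) : ℕ) = 0 then Complex.exp (β * H) else 1) := by
    have hmem : ∀ σ : V → Fin q,
        σ ∈ Finset.univ.filter (fun σ : V → Fin q => ∀ u v, G.Connects A u v → σ u = σ v) →
        ∀ a b : V, (G.compSetoid A).r a b → σ a = σ b :=
      fun σ h a b hab => (Finset.mem_filter.mp h).2 a b hab
    apply Finset.sum_bij'
      (i := fun σ hσ => fun c : G.Comp A => Quotient.lift σ (hmem σ hσ) c)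
      (j := fun τ _ => fun v => τ (Quotient.mk (G.compSetoid A) v))
    case hi => intro σ hσ; exact Finset.mem_univ _
    case hj =>
      intro τ _
      rw [Finset.mem_filter]
      exact ⟨Finset.mem_univ _, fun u v hc => congrArg τ (Quotient.sound hc)⟩
    case left_neg => intro σ hσ; rfl
    case right_neg =>
      intro τ hτ
      funext c
      induction c using Quotient.ind with
      | _ v => rfl
    case h => intro σ hσ; rfl
  rw [step2]
  -- factor over components
  have step3 : ∀ τ : G.Comp A → Fin q,
      (∏ v : V, (if (τ (Quotient.mk (G.compSetoid A) v) : ℕ) = 0 then Complex.exp (β * H) else 1)) =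
      ∏ c : G.Comp A, (if (τ c : ℕ) = 0 then Complex.exp (β * H) else 1) ^ ((G.compVerts A c).card) := by
    intro τ
    rw [← Finset.prod_fiberwise Finset.univ (fun v => Quotient.mk (G.compSetoid A) v)
      (fun v => (if (τ (Quotient.mk (G.compSetoid A) v) : ℕ) = 0 then Complex.exp (β * H) else 1))]
    apply Finset.prod_congr rfl
    intro c _
    unfold compVerts
    rw [← Finset.prod_const]
    refine Finset.prod_congr (by congr) ?_
    intro v hv
    rw [(by simpa using hv : Quotient.mk (G.compSetoid A) v = c)]
  simp_rw [step3]
  rw [← Fintype.piFinset_univ]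
  refine Eq.trans (Finset.prod_univ_sum (fun _ : G.Comp A => (univ : Finset (Fin q)))
    (fun c α => (if (α : ℕ) = 0 then Complex.exp (β * H) else 1) ^ ((G.compVerts A c).card))).symm ?_
  apply Finset.prod_congr rfl
  intro c _
  -- evaluate the single-component sum
  set n := (G.compVerts A c).card with hn
  have hsum : ∀ α : Fin q, (if (α : ℕ) = 0 then Complex.exp (β * H) else 1) ^ n =
      (if α = (⟨0, hq0⟩ : Fin q) then Complex.exp (β * H) ^ n - 1 else 0) + 1 := by
    intro α
    by_cases h : (α : ℕ) = 0
    · rw [if_pos h, if_pos (Fin.ext h), sub_add_cancel]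
    · rw [if_neg h, if_neg (fun hc => h (by rw [hc])), one_pow, zero_add]
  simp_rw [hsum]
  rw [Finset.sum_add_distrib, Finset.sum_ite_eq' Finset.univ (⟨0, hq0⟩ : Fin q),
    if_pos (Finset.mem_univ _), Finset.sum_const, Finset.card_univ, Fintype.card_fin,
    nsmul_eq_mul, mul_one]
  have hexp : Complex.exp (β * H) ^ n = Complex.exp (β * H * (n : ℂ)) := by
    rw [mul_comm (β * H) (n : ℂ), Complex.exp_nat_mul]
  rw [hexp]
  ring

lemma sum_pow_card (T : Finset E) (x : ℂ) :
    ∑ S ∈ T.powerset, x ^ S.card = (x + 1) ^ T.card := by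
  calc ∑ S ∈ T.powerset, x ^ S.card
      = ∑ S ∈ T.powerset, (∏ e ∈ S, x) * ∏ e ∈ T \ S, (1 : ℂ) := by
        apply Finset.sum_congr rfl
        intro S _
        rw [Finset.prod_const, Finset.prod_const_one, mul_one]
    _ = ∏ e ∈ T, (x + 1) := (Finset.prod_add _ _ _).symm
    _ = (x + 1) ^ T.card := Finset.prod_const _

lemma pointwise_expansion (G : FinMultigraph V E) (σ : V → Fin q) (β J H : ℂ) :
    Complex.exp (β * (J * (∑ e : E, G.edgeDelta σ e) +
        H * ∑ v : V, (if (σ v : ℕ) = 0 then (1 : ℂ) else 0))) =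
      (∑ A : Finset E, (Complex.exp (β * J) - 1) ^ A.card * ∏ e ∈ A, G.edgeDelta σ e) *
        ∏ v : V, (if (σ v : ℕ) = 0 then Complex.exp (β * H) else 1) := by
  rw [mul_add, Complex.exp_add]
  congr 1
  · calc Complex.exp (β * (J * ∑ e : E, G.edgeDelta σ e))
        = Complex.exp (∑ e : E, β * (J * G.edgeDelta σ e)) := by
          rw [Finset.mul_sum, Finset.mul_sum]
      _ = ∏ e : E, Complex.exp (β * (J * G.edgeDelta σ e)) := Complex.exp_sum _ _
      _ = ∏ e : E, ((Complex.exp (β * J) - 1) * G.edgeDelta σ e + 1) := by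
          apply Finset.prod_congr rfl
          intro e _
          rcases edgeDelta_zero_or_one σ e (G := G) with h | h <;> rw [h]
          · rw [mul_zero, mul_zero, mul_zero, Complex.exp_zero, zero_add]
          · rw [mul_one, mul_one, sub_add_cancel]
      _ = ∑ A ∈ (Finset.univ : Finset E).powerset,
            (∏ e ∈ A, (Complex.exp (β * J) - 1) * G.edgeDelta σ e) *
              ∏ e ∈ Finset.univ \ A, (1 : ℂ) := Finset.prod_add _ _ _
      _ = ∑ A : Finset E, (Complex.exp (β * J) - 1) ^ A.card * ∏ e ∈ A, G.edgeDelta σ e := by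
          rw [Finset.powerset_univ]
          apply Finset.sum_congr rfl
          intro A _
          rw [Finset.prod_const_one, mul_one, Finset.prod_mul_distrib, Finset.prod_const]
  · calc Complex.exp (β * (H * ∑ v : V, (if (σ v : ℕ) = 0 then (1 : ℂ) else 0)))
        = Complex.exp (∑ v : V, β * (H * (if (σ v : ℕ) = 0 then (1 : ℂ) else 0))) := by
          rw [Finset.mul_sum, Finset.mul_sum]
      _ = ∏ v : V, Complex.exp (β * (H * (if (σ v : ℕ) = 0 then (1 : ℂ) else 0))) :=
          Complex.exp_sum _ _
      _ = ∏ v : V, (if (σ v : ℕ) = 0 then Complex.exp (β * H) else 1) := by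
          apply Finset.prod_congr rfl
          intro v _
          by_cases h : (σ v : ℕ) = 0
          · rw [if_pos h, if_pos h, mul_one]
          · rw [if_neg h, if_neg h, mul_zero, mul_zero, Complex.exp_zero]


end FinMultigraph

open FinMultigraph in
/-- Spanning forest expansion of the Potts partition function with
constant coupling `J` and constant field `H` favouring the first spin:
`Z(G) = Σ_F (∏_i (e^{βH|V(F_i)|}+q−1)) (e^{βJ}−1)^{|E(F)|} ∏_{EA(F)} e^{βJ}`. -/
theorem ZconstField_spanning_forest_expansion {V E : Type} [Fintype V] [Fintype E]
    [LinearOrder E] (G : FinMultigraph V E) (q : ℕ) (hq : 1 ≤ q) (β J H : ℂ) :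
    G.ZconstField q β J H =
      ∑ F ∈ Finset.univ.filter (fun F => G.IsForest F),
        (∏ c : G.Comp F,
          (Complex.exp (β * H * ((G.compVerts F c).card : ℂ)) + (q : ℂ) - 1)) *
        (Complex.exp (β * J) - 1) ^ F.card *
        ∏ e ∈ G.extActives F, Complex.exp (β * J) := by
  classical
set w : ℕ → ℂ := fun n => Complex.exp (β * H * (n : ℂ)) + (q : ℂ) - 1 with hw
  -- Step 1: Fortuin–Kasteleyn expansion
  have fk : G.ZconstField q β J H =
      ∑ A : Finset E, sProd w (G.compSetoid A) * (Complex.exp (β * J) - 1) ^ A.card := by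
    calc G.ZconstField q β J H
        = ∑ σ : V → Fin q,
            (∑ A : Finset E, (Complex.exp (β * J) - 1) ^ A.card * ∏ e ∈ A, G.edgeDelta σ e) *
              ∏ v : V, (if (σ v : ℕ) = 0 then Complex.exp (β * H) else 1) := by
          rw [ZconstField]
          exact Finset.sum_congr rfl fun σ _ => pointwise_expansion G σ β J H
      _ = ∑ σ : V → Fin q, ∑ A : Finset E, (Complex.exp (β * J) - 1) ^ A.card *
              ((∏ e ∈ A, G.edgeDelta σ e) *
                ∏ v : V, (if (σ v : ℕ) = 0 then Complex.exp (β * H) else 1)) := by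
          apply Finset.sum_congr rfl
          intro σ _
          rw [Finset.sum_mul]
          exact Finset.sum_congr rfl fun A _ => mul_assoc _ _ _
      _ = ∑ A : Finset E, ∑ σ : V → Fin q, (Complex.exp (β * J) - 1) ^ A.card *
              ((∏ e ∈ A, G.edgeDelta σ e) *
                ∏ v : V, (if (σ v : ℕ) = 0 then Complex.exp (β * H) else 1)) :=
          Finset.sum_comm
      _ = ∑ A : Finset E, (Complex.exp (β * J) - 1) ^ A.card *
            ∑ σ : V → Fin q, (∏ e ∈ A, G.edgeDelta σ e) *
                ∏ v : V, (if (σ v : ℕ) = 0 then Complex.exp (β * H) else 1) := by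
          exact Finset.sum_congr rfl fun A _ => (Finset.mul_sum _ _ _).symm
      _ = ∑ A : Finset E, sProd w (G.compSetoid A) * (Complex.exp (β * J) - 1) ^ A.card := by
          apply Finset.sum_congr rfl
          intro A _
          rw [spin_sum G q hq β H A, mul_comm]
          exact congrArg (· * _) (compProd_eq G A w)
  rw [fk]
  -- Step 2: regroup by the reverse-Kruskal forest
  rw [← Finset.sum_fiberwise_of_maps_to
    (g := fun A : Finset E => G.krk A)
    (fun A _ => Finset.mem_filter.mpr ⟨Finset.mem_univ _, G.krk_forest A⟩)
    (fun A => sProd w (G.compSetoid A) * (Complex.exp (β * J) - 1) ^ A.card)]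
  apply Finset.sum_congr rfl
  intro F hF
  have hFor : G.IsForest F := (Finset.mem_filter.mp hF).2
  refine Eq.trans ?_ (congrArg (fun x => x * (Complex.exp (β * J) - 1) ^ F.card *
    ∏ e ∈ G.extActives F, Complex.exp (β * J)) (compProd_eq G F w)).symm
  calc ∑ A ∈ Finset.univ.filter (fun A => G.krk A = F),
        sProd w (G.compSetoid A) * (Complex.exp (β * J) - 1) ^ A.card
      = ∑ A ∈ Finset.univ.filter (fun A => G.krk A = F),
        sProd w (G.compSetoid F) * (Complex.exp (β * J) - 1) ^ A.card := by
        apply Finset.sum_congr rfl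
        intro A hA
        have hkA : G.krk A = F := (Finset.mem_filter.mp hA).2
        have hset : G.compSetoid A = G.compSetoid F :=
          compSetoid_congr fun u v => by rw [← hkA]; exact G.connects_krk A u v
        rw [hset]
    _ = ∑ S ∈ (G.extActives F).powerset,
        sProd w (G.compSetoid F) * (Complex.exp (β * J) - 1) ^ (F.card + S.card) := by
        apply Finset.sum_bij'
          (i := fun A _ => A \ F)
          (j := fun S _ => F ∪ S)
        case hi =>
          intro A hA
          have hkA : G.krk A = F := (Finset.mem_filter.mp hA).2
          rw [Finset.mem_powerset]
          intro e he
          rw [Finset.mem_sdiff] at he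
          rw [extActives, Finset.mem_filter]
          exact ⟨Finset.mem_univ _, hkA ▸ G.extActive_of_rejected he.1 (by
            rw [hkA]; exact he.2)⟩
        case hj =>
          intro S hS
          rw [Finset.mem_powerset] at hS
          rw [Finset.mem_filter]
          refine ⟨Finset.mem_univ _, krk_union hFor ?_⟩
          intro s' hs'
          exact (Finset.mem_filter.mp (hS hs')).2
        case left_neg =>
          intro A hA
          have hkA : G.krk A = F := (Finset.mem_filter.mp hA).2
          have hFA : F ⊆ A := hkA ▸ G.krk_subset A
          exact Finset.union_sdiff_of_subset hFA
        case right_neg =>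
          intro S hS
          rw [Finset.mem_powerset] at hS
          apply Finset.union_sdiff_cancel_left
          rw [Finset.disjoint_left]
          intro a haF haS
          exact (Finset.mem_filter.mp (hS haS)).2.1 haF
        case h =>
          intro A hA
          have hkA : G.krk A = F := (Finset.mem_filter.mp hA).2
          have hFA : F ⊆ A := hkA ▸ G.krk_subset A
          have hcard : A.card = F.card + (A \ F).card := by
            rw [add_comm, Finset.card_sdiff_add_card_eq_card hFA]
          rw [hcard]
    _ = (sProd w (G.compSetoid F) * (Complex.exp (β * J) - 1) ^ F.card) *
          ∑ S ∈ (G.extActives F).powerset, (Complex.exp (β * J) - 1) ^ S.card := by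
        rw [Finset.mul_sum]
        apply Finset.sum_congr rfl
        intro S _
        rw [pow_add, mul_assoc]
    _ = sProd w (G.compSetoid F) * (Complex.exp (β * J) - 1) ^ F.card *
          ∏ e ∈ G.extActives F, Complex.exp (β * J) := by
        rw [sum_pow_card, Finset.prod_const, sub_add_cancel]
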